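/- arXiv:2503.12607 — 2 statements merged into one kernel-verified Lean document; each statement's English description precedes it below -/
import Mathlib

section
/- Let c > 0, δ > 0, and k ∈ ℕ be constants, fix a real number a with 0 < a < 1, and consider bootstrap percolation on Q_n with infection threshold ⌈n^a⌉, where each vertex is initially infected independently with some probability p. Suppose that for all sufficiently large n and every vertex x ∈ V(Q_n), P(x ∉ A_k) ≤ exp(−c·n^δ). Then there exists a constant d > 0 such that for all sufficiently large n and every vertex x, P(x ∉ A_{2k+1}) ≤ exp(−d·n^{1+δ}). -/
open Finset Filter
open scoped Classical

noncomputable section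

/-- The infected set after `i` steps of `r`-neighbour bootstrap percolation on the graph `G`,
starting from the initial infected set `A0`:
`A_{i+1} = A_i ∪ {v : |N(v) ∩ A_i| ≥ r}`. -/
def bootSets {V : Type*} [Fintype V] [DecidableEq V] (G : SimpleGraph V) (r : ℕ)
    (A0 : Finset V) : ℕ → Finset V
  | 0 => A0
  | i + 1 =>
      bootSets G r A0 i ∪
        Finset.univ.filter fun v => r ≤ (G.neighborFinset v ∩ bootSets G r A0 i).card

/-- `A0` percolates under the `r`-neighbour bootstrap process on `G`. -/
def percolates {V : Type*} [Fintype V] [DecidableEq V] (G : SimpleGraph V) (r : ℕ)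
    (A0 : Finset V) : Prop :=
  ∃ i, bootSets G r A0 i = Finset.univ

/-- The probability that the initial infected set is exactly `A`, when every vertex is
infected independently with probability `p`. -/
def configProb {V : Type*} [Fintype V] [DecidableEq V] (p : ℝ) (A : Finset V) : ℝ :=
  p ^ A.card * (1 - p) ^ (Fintype.card V - A.card)

/-- The probability of the event `E` about the initial infected set, when every vertex is
infected independently with probability `p`. -/
def probEvent {V : Type*} [Fintype V] [DecidableEq V] (p : ℝ) (E : Finset V → Prop) : ℝ :=
  ∑ A : Finset V, if E A then configProb p A else 0

/-- The generalized hypercube `Q_{k,n}`: vertices are `{0,1}^n`, two vertices being adjacent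
iff their Hamming distance is between `1` and `k`.  The usual hypercube `Q_n` is
`cubeGraph n 1`. -/
def cubeGraph (n k : ℕ) : SimpleGraph (Fin n → Bool) where
  Adj x y := 1 ≤ hammingDist x y ∧ hammingDist x y ≤ k
  symm := by
    constructor
    intro x y h
    rwa [hammingDist_comm]
  loopless := by
    constructor
    intro x h
    simp [hammingDist_self] at h

/-- The critical probability for `r`-neighbour bootstrap percolation on `Q_{k,n}` where every
vertex is initially infected independently with probability `p`:
the supremum of all `p ∈ (0,1)` for which percolation has probability at most `1/2`. -/
def critProb (n k r : ℕ) : ℝ :=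
  sSup {p : ℝ | p ∈ Set.Ioo (0 : ℝ) 1 ∧
    probEvent p (fun A0 => percolates (cubeGraph n k) r A0) ≤ 1 / 2}

/-- The `Boot1(t)` process with base threshold `r`: at step `1` the threshold is `r - t`,
afterwards it is `r`. -/
def boot1Sets {V : Type*} [Fintype V] [DecidableEq V] (G : SimpleGraph V) (r t : ℕ)
    (A0 : Finset V) : ℕ → Finset V
  | 0 => A0
  | 1 => A0 ∪ Finset.univ.filter fun v => r - t ≤ (G.neighborFinset v ∩ A0).card
  | i + 2 =>
      boot1Sets G r t A0 (i + 1) ∪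
        Finset.univ.filter fun v =>
          r ≤ (G.neighborFinset v ∩ boot1Sets G r t A0 (i + 1)).card

/-- The `Boot2(t)` (= `Boot3(t)`) process with base threshold `r`: at step `1` the threshold
is `r - 2t`, at step `2` it is `r - t`, and afterwards it is `r`. -/
def boot2Sets {V : Type*} [Fintype V] [DecidableEq V] (G : SimpleGraph V) (r t : ℕ)
    (A0 : Finset V) : ℕ → Finset V
  | 0 => A0
  | 1 => A0 ∪ Finset.univ.filter fun v => r - 2 * t ≤ (G.neighborFinset v ∩ A0).card
  | 2 =>
      boot2Sets G r t A0 1 ∪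
        Finset.univ.filter fun v =>
          r - t ≤ (G.neighborFinset v ∩ boot2Sets G r t A0 1).card
  | i + 3 =>
      boot2Sets G r t A0 (i + 2) ∪
        Finset.univ.filter fun v =>
          r ≤ (G.neighborFinset v ∩ boot2Sets G r t A0 (i + 2)).card

section ProbAux
variable {V : Type*} [Fintype V] [DecidableEq V] {p : ℝ}

lemma configProb_nonneg (hp : p ∈ Set.Icc (0:ℝ) 1) (A : Finset V) :
    0 ≤ configProb p A :=
  mul_nonneg (pow_nonneg hp.1 _) (pow_nonneg (by have := hp.2; linarith) _)

lemma probEvent_nonneg (hp : p ∈ Set.Icc (0:ℝ) 1) (E : Finset V → Prop) :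
    0 ≤ probEvent p E :=
  Finset.sum_nonneg fun A _ => by
    by_cases hE : E A
    · rw [if_pos hE]; exact configProb_nonneg hp A
    · rw [if_neg hE]

lemma probEvent_mono (hp : p ∈ Set.Icc (0:ℝ) 1) {E F : Finset V → Prop}
    (h : ∀ A, E A → F A) : probEvent p E ≤ probEvent p F := by
  refine Finset.sum_le_sum fun A _ => ?_
  by_cases hE : E A
  · rw [if_pos hE, if_pos (h A hE)]
  · rw [if_neg hE]
    by_cases hF : F A
    · rw [if_pos hF]; exact configProb_nonneg hp A
    · rw [if_neg hF]

lemma probEvent_exists_le {ι : Type*} (hp : p ∈ Set.Icc (0:ℝ) 1)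
    (s : Finset ι) (Q : ι → Finset V → Prop) :
    probEvent p (fun A => ∃ i ∈ s, Q i A) ≤ ∑ i ∈ s, probEvent p (Q i) := by
  have hswap : ∑ i ∈ s, probEvent p (Q i)
      = ∑ A : Finset V, ∑ i ∈ s, (if Q i A then configProb p A else 0) := by
    unfold probEvent; exact Finset.sum_comm
  rw [hswap]
  refine Finset.sum_le_sum fun A _ => ?_
  by_cases hA : ∃ i ∈ s, Q i A
  · obtain ⟨i, hi, hQ⟩ := hA
    rw [if_pos ⟨i, hi, hQ⟩]
    have h2 : ∀ j ∈ s, 0 ≤ (if Q j A then configProb p A else 0) := by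
      intro j _
      by_cases h2 : Q j A
      · rw [if_pos h2]; exact configProb_nonneg hp A
      · rw [if_neg h2]
    have h3 := Finset.single_le_sum h2 hi
    rw [if_pos hQ] at h3
    exact h3
  · rw [if_neg hA]
    refine Finset.sum_nonneg fun j _ => ?_
    by_cases h2 : Q j A
    · rw [if_pos h2]; exact configProb_nonneg hp A
    · rw [if_neg h2]

/-- restricted Bernoulli "measure" on subsets of `T`. -/
def prT (p : ℝ) (T : Finset V) (E : Finset V → Prop) : ℝ :=
  ∑ B ∈ T.powerset, if E B then p ^ B.card * (1 - p) ^ (T.card - B.card) else 0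

lemma prT_congr {T : Finset V} {E F : Finset V → Prop}
    (h : ∀ B ∈ T.powerset, (E B ↔ F B)) : prT p T E = prT p T F :=
  Finset.sum_congr rfl fun B hB => if_congr (h B hB) rfl rfl

lemma prT_empty (E : Finset V → Prop) : prT p ∅ E = if E ∅ then 1 else 0 := by
  simp [prT]

lemma prT_insert {a : V} {T : Finset V} (ha : a ∉ T) (E : Finset V → Prop) :
    prT p (insert a T) E
      = p * prT p T (fun B => E (insert a B)) + (1 - p) * prT p T E := by
  have hdisj : Disjoint T.powerset (T.powerset.image (insert a)) := by
    rw [Finset.disjoint_left]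
    intro B hB hB'
    obtain ⟨C, hC, rfl⟩ := Finset.mem_image.1 hB'
    exact ha (Finset.mem_powerset.1 hB (Finset.mem_insert_self a C))
  have hinj : ∀ B ∈ T.powerset, ∀ C ∈ T.powerset, insert a B = insert a C → B = C := by
    intro B hB C hC hBC
    have haB : a ∉ B := fun h => ha (Finset.mem_powerset.1 hB h)
    have haC : a ∉ C := fun h => ha (Finset.mem_powerset.1 hC h)
    rw [← Finset.erase_insert haB, hBC, Finset.erase_insert haC]
  rw [prT, Finset.powerset_insert, Finset.sum_union hdisj, Finset.sum_image hinj]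
  rw [prT, prT, Finset.mul_sum, Finset.mul_sum, add_comm]
  congr 1
  · refine Finset.sum_congr rfl fun B hB => ?_
    have haB : a ∉ B := fun h => ha (Finset.mem_powerset.1 hB h)
    have hcard : (insert a B).card = B.card + 1 := Finset.card_insert_of_notMem haB
    have hcardT : (insert a T).card = T.card + 1 := Finset.card_insert_of_notMem ha
    by_cases hE : E (insert a B)
    · rw [if_pos hE, if_pos hE, hcard, hcardT, Nat.succ_sub_succ]
      ring
    · rw [if_neg hE, if_neg hE, mul_zero]
  · refine Finset.sum_congr rfl fun B hB => ?_
    have hBc : B.card ≤ T.card := Finset.card_le_card (Finset.mem_powerset.1 hB)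
    have hcardT : (insert a T).card = T.card + 1 := Finset.card_insert_of_notMem ha
    by_cases hE : E B
    · rw [if_pos hE, if_pos hE, hcardT]
      have h3 : T.card + 1 - B.card = (T.card - B.card) + 1 := by omega
      rw [h3]
      ring
    · rw [if_neg hE, if_neg hE, mul_zero]

lemma prT_true (T : Finset V) : prT p T (fun _ => True) = 1 := by
  induction T using Finset.induction_on with
  | empty => simp [prT]
  | @insert a T ha ih => simp only [prT_insert ha, ih]; ring

lemma prT_union_right {S : Finset V} (E : Finset V → Prop)
    (hE : ∀ B, E B ↔ E (B ∩ S)) :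
    ∀ T : Finset V, Disjoint S T → prT p (S ∪ T) E = prT p S E := by
  intro T
  induction T using Finset.induction_on with
  | empty => intro _; rw [Finset.union_empty]
  | @insert a T ha ih =>
    intro hST
    have haS : a ∉ S := fun h => Finset.disjoint_left.1 hST h (Finset.mem_insert_self a T)
    have hST' : Disjoint S T := hST.mono_right (Finset.subset_insert a T)
    have haST : a ∉ S ∪ T := by simp [haS, ha]
    rw [Finset.union_insert, prT_insert haST]
    have h1 : ∀ B, (E (insert a B) ↔ E B) := by
      intro B
      rw [hE (insert a B), Finset.insert_inter_of_notMem haS, ← hE B]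
    rw [prT_congr (fun B _ => h1 B), ih hST']
    ring
end ProbAux

section ProdAux
variable {V : Type*} [Fintype V] [DecidableEq V] {p : ℝ}

lemma insert_inter_insert {a : V} (B S : Finset V) :
    (insert a B) ∩ (insert a S) = insert a (B ∩ S) := by
  ext x
  simp only [Finset.mem_inter, Finset.mem_insert]
  tauto

lemma prT_union_prod {T : Finset V} (F : Finset V → Prop)
    (hF : ∀ B, F B ↔ F (B ∩ T)) :
    ∀ (S : Finset V) (E : Finset V → Prop), (∀ B, E B ↔ E (B ∩ S)) → Disjoint S T →
      prT p (S ∪ T) (fun B => E B ∧ F B) = prT p S E * prT p T F := by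
  intro S
  induction S using Finset.induction_on with
  | empty =>
    intro E hE _
    rw [Finset.empty_union, prT_empty]
    by_cases h0 : E ∅
    · rw [if_pos h0, one_mul]
      refine prT_congr fun B _ => ?_
      have hEB : E B := by rw [hE B, Finset.inter_empty]; exact h0
      exact ⟨fun h => h.2, fun h => ⟨hEB, h⟩⟩
    · rw [if_neg h0, zero_mul, prT]
      refine Finset.sum_eq_zero fun B _ => ?_
      have hEB : ¬ E B := by rw [hE B, Finset.inter_empty]; exact h0
      rw [if_neg (fun h => hEB h.1)]
  | @insert a S ha ih =>
    intro E hE hdisj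
    have haT : a ∉ T := Finset.disjoint_left.1 hdisj (Finset.mem_insert_self a S)
    have hST : Disjoint S T := hdisj.mono_left (Finset.subset_insert a S)
    have haST : a ∉ S ∪ T := by simp [ha, haT]
    rw [Finset.insert_union, prT_insert haST]
    -- rewrite the two inner events
    have h1 : ∀ B, ((fun B => E B ∧ F B) (insert a B) ↔
        ((fun B => E (insert a (B ∩ S))) B ∧ F B)) := by
      intro B
      have hEa : E (insert a B) ↔ E (insert a (B ∩ S)) := by
        rw [hE (insert a B), insert_inter_insert]
      have hFa : F (insert a B) ↔ F B := by
        rw [hF (insert a B), Finset.insert_inter_of_notMem haT, ← hF B]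
      show E (insert a B) ∧ F (insert a B) ↔ E (insert a (B ∩ S)) ∧ F B
      rw [hEa, hFa]
    have h2 : ∀ B ∈ (S ∪ T).powerset, ((E B ∧ F B) ↔
        ((fun B => E (B ∩ S)) B ∧ F B)) := by
      intro B hB
      have haB : a ∉ B := fun h => haST (Finset.mem_powerset.1 hB h)
      have hEB : E B ↔ E (B ∩ S) := by
        rw [hE B, Finset.inter_insert_of_notMem haB]
      show E B ∧ F B ↔ E (B ∩ S) ∧ F B
      rw [hEB]
    have hE₁ : ∀ B, (E (insert a (B ∩ S)) ↔ E (insert a ((B ∩ S) ∩ S))) := by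
      intro B
      rw [Finset.inter_assoc, Finset.inter_self]
    have hE₀ : ∀ B, (E (B ∩ S) ↔ E ((B ∩ S) ∩ S)) := by
      intro B
      rw [Finset.inter_assoc, Finset.inter_self]
    rw [prT_congr (fun B _ => h1 B), prT_congr h2]
    rw [ih (fun B => E (insert a (B ∩ S))) hE₁ hST,
        ih (fun B => E (B ∩ S)) hE₀ hST]
    rw [prT_insert ha]
    have h3 : prT p S (fun B => E (insert a B)) = prT p S (fun B => E (insert a (B ∩ S))) := by
      refine prT_congr fun B hB => ?_
      rw [Finset.inter_eq_left.2 (Finset.mem_powerset.1 hB)]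
    have h4 : prT p S E = prT p S (fun B => E (B ∩ S)) := by
      refine prT_congr fun B hB => ?_
      rw [Finset.inter_eq_left.2 (Finset.mem_powerset.1 hB)]
    rw [h3, h4]
    ring

lemma prT_biUnion_prod {ι : Type*} [DecidableEq ι] (s : Finset ι)
    (T : ι → Finset V) (E : ι → Finset V → Prop)
    (hdisj : ∀ i ∈ s, ∀ j ∈ s, i ≠ j → Disjoint (T i) (T j))
    (hsup : ∀ i ∈ s, ∀ B, E i B ↔ E i (B ∩ T i)) :
    prT p (s.biUnion T) (fun B => ∀ i ∈ s, E i B) = ∏ i ∈ s, prT p (T i) (E i) := by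
  induction s using Finset.induction_on with
  | empty => simp [prT_empty]
  | @insert a s ha ih =>
    rw [Finset.biUnion_insert]
    have hdisjaT : Disjoint (T a) (s.biUnion T) := by
      rw [Finset.disjoint_biUnion_right]
      intro i hi
      exact hdisj a (Finset.mem_insert_self a s) i (Finset.mem_insert_of_mem hi)
        (fun h => ha (h ▸ hi))
    have hFsup : ∀ B, (∀ i ∈ s, E i B) ↔ (∀ i ∈ s, E i (B ∩ s.biUnion T)) := by
      intro B
      refine forall₂_congr fun i hi => ?_
      have hTi : s.biUnion T ∩ T i = T i :=
        Finset.inter_eq_right.2 (Finset.subset_biUnion_of_mem T hi)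
      rw [hsup i (Finset.mem_insert_of_mem hi) B, ← hTi, ← Finset.inter_assoc,
        ← hsup i (Finset.mem_insert_of_mem hi) (B ∩ s.biUnion T)]
    have hstep : prT p (T a ∪ s.biUnion T) (fun B => ∀ i ∈ insert a s, E i B)
        = prT p (T a ∪ s.biUnion T) (fun B => E a B ∧ ∀ i ∈ s, E i B) := by
      refine prT_congr fun B _ => ?_
      exact Finset.forall_mem_insert a s (fun i => E i B)
    rw [hstep, prT_union_prod (fun B => ∀ i ∈ s, E i B) hFsup (T a) (E a)
        (hsup a (Finset.mem_insert_self a s)) hdisjaT]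
    rw [ih (fun i hi j hj hij => hdisj i (Finset.mem_insert_of_mem hi) j
        (Finset.mem_insert_of_mem hj) hij)
        (fun i hi => hsup i (Finset.mem_insert_of_mem hi))]
    rw [Finset.prod_insert ha]

lemma probEvent_eq_prT_univ (E : Finset V → Prop) :
    probEvent p E = prT p Finset.univ E := by
  unfold probEvent prT
  rw [Finset.powerset_univ]
  refine Finset.sum_congr rfl fun A _ => ?_
  unfold configProb
  rw [Finset.card_univ]

lemma probEvent_eq_prT (T : Finset V) (E : Finset V → Prop)
    (hE : ∀ B, E B ↔ E (B ∩ T)) : probEvent p E = prT p T E := by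
  rw [probEvent_eq_prT_univ]
  have huniv : (Finset.univ : Finset V) = T ∪ (Finset.univ \ T) :=
    (Finset.union_sdiff_of_subset (Finset.subset_univ T)).symm
  rw [huniv, prT_union_right E hE _ Finset.disjoint_sdiff]

lemma probEvent_prod {ι : Type*} [DecidableEq ι] (s : Finset ι)
    (T : ι → Finset V) (E : ι → Finset V → Prop)
    (hdisj : ∀ i ∈ s, ∀ j ∈ s, i ≠ j → Disjoint (T i) (T j))
    (hsup : ∀ i ∈ s, ∀ B, E i B ↔ E i (B ∩ T i)) :
    probEvent p (fun B => ∀ i ∈ s, E i B) = ∏ i ∈ s, probEvent p (E i) := by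
  have hbig : ∀ B, (∀ i ∈ s, E i B) ↔ (∀ i ∈ s, E i (B ∩ s.biUnion T)) := by
    intro B
    refine forall₂_congr fun i hi => ?_
    have hTi : s.biUnion T ∩ T i = T i :=
      Finset.inter_eq_right.2 (Finset.subset_biUnion_of_mem T hi)
    rw [hsup i hi B, ← hTi, ← Finset.inter_assoc, ← hsup i hi (B ∩ s.biUnion T)]
  rw [probEvent_eq_prT (s.biUnion T) _ hbig, prT_biUnion_prod s T E hdisj hsup]
  exact Finset.prod_congr rfl fun i hi => (probEvent_eq_prT (T i) (E i) (hsup i hi)).symm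
end ProdAux

section CubeAux
variable {n : ℕ}

def flipSet (x : Fin n → Bool) (S : Finset (Fin n)) : Fin n → Bool :=
  fun j => if j ∈ S then !(x j) else x j

lemma flipSet_empty (x : Fin n → Bool) : flipSet x ∅ = x := by
  funext j; simp [flipSet]

lemma flipSet_insert {x : Fin n → Bool} {i : Fin n} {S : Finset (Fin n)} (hi : i ∉ S) :
    flipSet x (insert i S) = flipSet (flipSet x {i}) S := by
  funext j
  by_cases h2 : j = i
  · subst h2; simp [flipSet, hi]
  · by_cases h1 : j ∈ S <;> simp [flipSet, h1, h2]

lemma hammingDist_flipSet {x : Fin n → Bool} {S S' : Finset (Fin n)}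
    (h : Disjoint S S') :
    hammingDist (flipSet x S) (flipSet x S') = S.card + S'.card := by
  have hfilter : (Finset.univ.filter fun i => flipSet x S i ≠ flipSet x S' i) = S ∪ S' := by
    ext i
    simp only [Finset.mem_filter, Finset.mem_univ, true_and, Finset.mem_union]
    by_cases hS : i ∈ S
    · have hS' : i ∉ S' := Finset.disjoint_left.1 h hS
      simp [flipSet, hS, hS']
    · by_cases hS' : i ∈ S' <;> simp [flipSet, hS, hS']
  show (Finset.univ.filter fun i => flipSet x S i ≠ flipSet x S' i).card = _
  rw [hfilter, Finset.card_union_of_disjoint h]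

lemma hammingDist_flipSet_single (x : Fin n → Bool) (i : Fin n) :
    hammingDist x (flipSet x {i}) = 1 := by
  have h := hammingDist_flipSet (x := x) (S := (∅ : Finset (Fin n))) (S' := {i})
    (Finset.disjoint_empty_left _)
  rwa [flipSet_empty, Finset.card_empty, Finset.card_singleton, zero_add] at h

lemma boot_local (r : ℕ) :
    ∀ (i : ℕ) (z : Fin n → Bool) (A B : Finset (Fin n → Bool)),
      (∀ w, hammingDist w z ≤ i → (w ∈ A ↔ w ∈ B)) →
      (z ∈ bootSets (cubeGraph n 1) r A i ↔ z ∈ bootSets (cubeGraph n 1) r B i) := by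
  intro i
  induction i with
  | zero =>
    intro z A B h
    exact h z (le_of_eq (hammingDist_self z))
  | succ i ih =>
    intro z A B h
    have hz : (z ∈ bootSets (cubeGraph n 1) r A i ↔ z ∈ bootSets (cubeGraph n 1) r B i) :=
      ih z A B fun w hw => h w (hw.trans (Nat.le_succ i))
    have hN : (cubeGraph n 1).neighborFinset z ∩ bootSets (cubeGraph n 1) r A i
        = (cubeGraph n 1).neighborFinset z ∩ bootSets (cubeGraph n 1) r B i := by
      ext u
      simp only [Finset.mem_inter, SimpleGraph.mem_neighborFinset]
      refine and_congr_right fun hu => ?_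
      have hd : hammingDist z u ≤ 1 := hu.2
      refine ih u A B fun w hw => h w ?_
      have h3 := hammingDist_triangle w u z
      have h4 : hammingDist u z ≤ 1 := by rwa [hammingDist_comm]
      omega
    show z ∈ _ ∪ _ ↔ z ∈ _ ∪ _
    simp only [Finset.mem_union, Finset.mem_filter, Finset.mem_univ, true_and, hN]
    exact or_congr hz Iff.rfl

lemma boot_local_ball (r kk : ℕ) (z : Fin n → Bool) (A : Finset (Fin n → Bool)) :
    (z ∈ bootSets (cubeGraph n 1) r A kk ↔
      z ∈ bootSets (cubeGraph n 1) r
        (A ∩ Finset.univ.filter fun w => hammingDist w z ≤ kk) kk) :=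
  boot_local r kk z A _ fun w hw => by
    simp [Finset.mem_inter, Finset.mem_filter, hw]

lemma exists_flip {r : ℕ} {A : Finset (Fin n → Bool)} {v : Fin n → Bool} {j : ℕ}
    (hv : v ∉ bootSets (cubeGraph n 1) r A (j + 1)) {U : Finset (Fin n)}
    (hU : U.card + r ≤ n) :
    ∃ i : Fin n, i ∉ U ∧ flipSet v {i} ∉ bootSets (cubeGraph n 1) r A j := by
  set Aj := bootSets (cubeGraph n 1) r A j with hAj
  have hcount : ((cubeGraph n 1).neighborFinset v ∩ Aj).card < r := by
    by_contra hc
    push_neg at hc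
    exact hv (Finset.mem_union_right _ (Finset.mem_filter.2 ⟨Finset.mem_univ _, hc⟩))
  have hfilter : (Finset.univ.filter fun i : Fin n => flipSet v {i} ∈ Aj).card
      ≤ ((cubeGraph n 1).neighborFinset v ∩ Aj).card := by
    refine Finset.card_le_card_of_injOn (fun i => flipSet v {i}) ?_ ?_
    · intro i hi
      rw [Finset.mem_coe, Finset.mem_filter] at hi
      refine Finset.mem_inter.2 ⟨SimpleGraph.mem_neighborFinset _ _ _ |>.2 ?_, hi.2⟩
      have hd := hammingDist_flipSet_single v i
      exact ⟨le_of_eq hd.symm, le_of_eq hd⟩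
    · intro i1 _ i2 _ hf
      by_contra hne
      have := congrFun hf i1
      simp [flipSet, Finset.mem_singleton, hne] at this
  have hBad : (U ∪ Finset.univ.filter fun i : Fin n => flipSet v {i} ∈ Aj).card < n := by
    have h1 := Finset.card_union_le U (Finset.univ.filter fun i : Fin n => flipSet v {i} ∈ Aj)
    omega
  obtain ⟨i, hi⟩ : ∃ i : Fin n, i ∉ U ∪ Finset.univ.filter fun i : Fin n => flipSet v {i} ∈ Aj := by
    by_contra hall
    push_neg at hall
    have hsub : (Finset.univ : Finset (Fin n)) ⊆ _ := fun i _ => hall i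
    have := Finset.card_le_card hsub
    rw [Finset.card_univ, Fintype.card_fin] at this
    omega
  refine ⟨i, fun h => hi (Finset.mem_union_left _ h), fun h => ?_⟩
  exact hi (Finset.mem_union_right _ (Finset.mem_filter.2 ⟨Finset.mem_univ _, h⟩))

lemma exists_chain {r kk : ℕ} {A : Finset (Fin n → Bool)} :
    ∀ (s : ℕ) (v : Fin n → Bool) (U : Finset (Fin n)),
      v ∉ bootSets (cubeGraph n 1) r A (kk + s) → U.card + s + r ≤ n →
      ∃ S : Finset (Fin n), S.card = s ∧ Disjoint S U ∧
        flipSet v S ∉ bootSets (cubeGraph n 1) r A kk := by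
  intro s
  induction s with
  | zero =>
    intro v U hv _
    exact ⟨∅, rfl, Finset.disjoint_empty_left U, by rwa [flipSet_empty]⟩
  | succ s ih =>
    intro v U hv hcard
    have hv' : v ∉ bootSets (cubeGraph n 1) r A ((kk + s) + 1) := hv
    obtain ⟨i, hiU, hvi⟩ := exists_flip hv' (U := U) (by omega)
    obtain ⟨S', hS'card, hS'disj, hS'boot⟩ := ih (flipSet v {i}) (insert i U) hvi
      (by rw [Finset.card_insert_of_notMem hiU]; omega)
    have hiS' : i ∉ S' := fun h =>
      Finset.disjoint_left.1 hS'disj h (Finset.mem_insert_self i U)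
    refine ⟨insert i S', by rw [Finset.card_insert_of_notMem hiS', hS'card], ?_, ?_⟩
    · rw [Finset.disjoint_insert_left]
      exact ⟨hiU, hS'disj.mono_right (Finset.subset_insert i U)⟩
    · rwa [flipSet_insert hiS']

lemma exists_family {r kk : ℕ} {A : Finset (Fin n → Bool)} {x : Fin n → Bool}
    (hx : x ∉ bootSets (cubeGraph n 1) r A (kk + (kk + 1))) :
    ∀ (m : ℕ) (U : Finset (Fin n)), U.card + m * (kk + 1) + r ≤ n →
      ∃ S : Fin m → Finset (Fin n),
        (∀ j, (S j).card = kk + 1) ∧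
        (∀ j, Disjoint (S j) U) ∧
        (∀ j l, j ≠ l → Disjoint (S j) (S l)) ∧
        (∀ j, flipSet x (S j) ∉ bootSets (cubeGraph n 1) r A kk) := by
  intro m
  induction m with
  | zero =>
    intro U _
    exact ⟨fun j => j.elim0, fun j => j.elim0, fun j => j.elim0, fun j => j.elim0,
      fun j => j.elim0⟩
  | succ m ih =>
    intro U hU
    have h1 : kk + 1 ≤ (m + 1) * (kk + 1) := Nat.le_mul_of_pos_left _ m.succ_pos
    obtain ⟨S₀, hS₀card, hS₀disj, hS₀boot⟩ := exists_chain (kk + 1) x U hx (by omega)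
    have h2 : (m + 1) * (kk + 1) = m * (kk + 1) + (kk + 1) := by ring
    have h3 := Finset.card_union_le U S₀
    obtain ⟨S, hcard, hdisjU, hpair, hboot⟩ := ih (U ∪ S₀) (by omega)
    refine ⟨Fin.cons S₀ S, ?_, ?_, ?_, ?_⟩
    · intro j
      refine Fin.cases ?_ ?_ j
      · simpa using hS₀card
      · intro i; simpa using hcard i
    · intro j
      refine Fin.cases ?_ ?_ j
      · simpa using hS₀disj
      · intro i
        simpa using (hdisjU i).mono_right Finset.subset_union_left
    · intro j
      refine Fin.cases ?_ ?_ j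
      · intro l
        refine Fin.cases ?_ ?_ l
        · intro h; exact absurd rfl h
        · intro i' _
          simp only [Fin.cons_zero, Fin.cons_succ]
          exact ((hdisjU i').mono_right Finset.subset_union_right).symm
      · intro i l
        refine Fin.cases ?_ ?_ l
        · intro _
          simp only [Fin.cons_zero, Fin.cons_succ]
          exact (hdisjU i).mono_right Finset.subset_union_right
        · intro i' hne
          simp only [Fin.cons_succ]
          exact hpair i i' (fun h => hne (by rw [h]))
    · intro j
      refine Fin.cases ?_ ?_ j
      · simpa using hS₀boot
      · intro i; simpa using hboot i
end CubeAux


/-- Let `c, δ > 0`, `k ∈ ℕ`, `0 < a < 1`, and consider bootstrap percolation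
on `Q_n` with threshold `⌈n^a⌉` and initial infection probability `p = p(n)`.  If for all
sufficiently large `n` every vertex satisfies `P(x ∉ A_k) ≤ exp(-c n^δ)`, then there is a
constant `d > 0` such that for all sufficiently large `n` every vertex satisfies
`P(x ∉ A_{2k+1}) ≤ exp(-d n^{1+δ})`. -/
theorem boost_uninfected_prob_Qn (c δ a : ℝ) (hc : 0 < c) (hδ : 0 < δ) (k : ℕ)
    (ha₁ : 0 < a) (ha₂ : a < 1) (p : ℕ → ℝ) (hp : ∀ n, p n ∈ Set.Icc (0 : ℝ) 1)
    (h : ∃ n₀ : ℕ, ∀ n ≥ n₀, ∀ x : Fin n → Bool,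
      probEvent (p n) (fun A0 => x ∉ bootSets (cubeGraph n 1) ⌈(n : ℝ) ^ a⌉₊ A0 k) ≤
        Real.exp (-c * (n : ℝ) ^ δ)) :
    ∃ d : ℝ, 0 < d ∧ ∃ n₁ : ℕ, ∀ n ≥ n₁, ∀ x : Fin n → Bool,
      probEvent (p n)
          (fun A0 => x ∉ bootSets (cubeGraph n 1) ⌈(n : ℝ) ^ a⌉₊ A0 (2 * k + 1)) ≤
        Real.exp (-d * (n : ℝ) ^ (1 + δ)) := by
  classical
  obtain ⟨n₀, h⟩ := h
  refine ⟨c / (8 * ((k : ℝ) + 1)), by positivity, ?_⟩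
  have hev1 : ∀ᶠ N : ℕ in atTop, 8 ≤ (N : ℝ) ^ (1 - a) :=
    tendsto_natCast_atTop_atTop.eventually
      ((tendsto_rpow_atTop (by linarith)).eventually_ge_atTop 8)
  have hev2 : ∀ᶠ N : ℕ in atTop, ((k : ℝ) + 1) * Real.log N ≤ (c / 2) * (N : ℝ) ^ δ := by
    have hlo := isLittleO_log_rpow_atTop hδ
    have hε : (0:ℝ) < (c / 2) / ((k : ℝ) + 1) := by positivity
    have h2 := hlo.def hε
    have h3 : ∀ᶠ x : ℝ in atTop, ((k:ℝ)+1) * Real.log x ≤ (c/2) * x ^ δ := by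
      filter_upwards [h2, eventually_ge_atTop (1:ℝ)] with x hx hx1
      have hlog : 0 ≤ Real.log x := Real.log_nonneg hx1
      have hrp : 0 ≤ x ^ δ := Real.rpow_nonneg (by linarith) δ
      rw [Real.norm_eq_abs, Real.norm_eq_abs, abs_of_nonneg hlog, abs_of_nonneg hrp] at hx
      have hk : (0:ℝ) < (k:ℝ)+1 := by positivity
      calc ((k:ℝ)+1) * Real.log x ≤ ((k:ℝ)+1) * ((c/2)/((k:ℝ)+1) * x ^ δ) :=
            mul_le_mul_of_nonneg_left hx (le_of_lt hk)
        _ = (c/2) * x ^ δ := by field_simp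
    exact tendsto_natCast_atTop_atTop.eventually h3
  have hev3 : ∀ᶠ N : ℕ in atTop, n₀ ≤ N := eventually_ge_atTop n₀
  have hev4 : ∀ᶠ N : ℕ in atTop, 32 * (k + 2) ≤ N := eventually_ge_atTop _
  obtain ⟨n₁, hn₁⟩ := eventually_atTop.1 (hev1.and (hev2.and (hev3.and hev4)))
  refine ⟨n₁, fun n hn x => ?_⟩
  obtain ⟨hc1, hc2, hc3, hc4⟩ := hn₁ n hn
  set R := ⌈(n:ℝ)^a⌉₊ with hR
  set m := n / (2*(k+1)) with hm
  -- basic numerics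
  have hn1 : 1 ≤ n := by omega
  have hnR : (1:ℝ) ≤ (n:ℝ) := by exact_mod_cast hn1
  have hnpos : (0:ℝ) < n := by linarith
  have h8 : 8 * (n:ℝ)^a ≤ n := by
    have hmul : (n:ℝ)^a * 8 ≤ (n:ℝ)^a * (n:ℝ)^(1-a) :=
      mul_le_mul_of_nonneg_left hc1 (Real.rpow_nonneg (le_of_lt hnpos) a)
    calc 8 * (n:ℝ)^a = (n:ℝ)^a * 8 := by ring
      _ ≤ (n:ℝ)^a * (n:ℝ)^(1-a) := hmul
      _ = (n:ℝ)^(a + (1-a)) := (Real.rpow_add hnpos a (1-a)).symm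
      _ = n := by rw [show a + (1-a) = 1 by ring, Real.rpow_one]
  have hr8 : 8 * R ≤ n + 7 := by
    have hceil : (R:ℝ) < (n:ℝ)^a + 1 :=
      Nat.ceil_lt_add_one (Real.rpow_nonneg (le_of_lt hnpos) a)
    have h9 : ((8*R : ℕ) : ℝ) < ((n + 8 : ℕ) : ℝ) := by push_cast; nlinarith
    have h10 : 8*R < n + 8 := by exact_mod_cast h9
    omega
  have hQ : 0 < 2*(k+1) := by omega
  have hdm : 2*(k+1) * m + n % (2*(k+1)) = n := Nat.div_add_mod n (2*(k+1))
  have hmod : n % (2*(k+1)) < 2*(k+1) := Nat.mod_lt _ hQ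
  have h2t : 2*(k+1)*m = 2*((k+1)*m) := by ring
  rw [h2t] at hdm
  have hmain : m*(k+1) + R ≤ n := by
    have e : m*(k+1) = (k+1)*m := by ring
    omega
  have hm4 : n ≤ 4 * ((k+1)*m) := by omega
  -- the vertices and balls associated to a family
  have hkk : 2*k+1 = k + (k+1) := by omega
  set Fam : Finset (Fin m → Finset (Fin n)) :=
    Finset.univ.filter
      (fun S => (∀ j, (S j).card = k+1) ∧ ∀ j l, j ≠ l → Disjoint (S j) (S l)) with hFam
  -- step 1: deterministic implication
  have hstep1 : ∀ A0 : Finset (Fin n → Bool),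
      (fun A0 => x ∉ bootSets (cubeGraph n 1) R A0 (2*k+1)) A0 →
      ∃ S ∈ Fam, ∀ j ∈ (Finset.univ : Finset (Fin m)),
        flipSet x (S j) ∉ bootSets (cubeGraph n 1) R A0 k := by
    intro A0 hx
    rw [hkk] at hx
    obtain ⟨S, hcard, hdisjU, hpair, hboot⟩ := exists_family hx m ∅ (by simpa using hmain)
    exact ⟨S, Finset.mem_filter.2 ⟨Finset.mem_univ _, hcard, hpair⟩, fun j _ => hboot j⟩
  have hle1 : probEvent (p n) (fun A0 => x ∉ bootSets (cubeGraph n 1) R A0 (2*k+1))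
      ≤ ∑ S ∈ Fam, probEvent (p n)
          (fun A0 => ∀ j ∈ (Finset.univ : Finset (Fin m)),
            flipSet x (S j) ∉ bootSets (cubeGraph n 1) R A0 k) :=
    le_trans (probEvent_mono (hp n) hstep1) (probEvent_exists_le (hp n) Fam _)
  -- step 2: independence for each family
  have hprod : ∀ S ∈ Fam,
      probEvent (p n) (fun A0 => ∀ j ∈ (Finset.univ : Finset (Fin m)),
        flipSet x (S j) ∉ bootSets (cubeGraph n 1) R A0 k)
      = ∏ j : Fin m, probEvent (p n)
          (fun A0 => flipSet x (S j) ∉ bootSets (cubeGraph n 1) R A0 k) := by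
    intro S hS
    obtain ⟨-, hcard, hpair⟩ := Finset.mem_filter.1 hS
    refine probEvent_prod Finset.univ
      (fun j => Finset.univ.filter fun w => hammingDist w (flipSet x (S j)) ≤ k)
      (fun j => fun A0 => flipSet x (S j) ∉ bootSets (cubeGraph n 1) R A0 k) ?_ ?_
    · intro i _ j _ hij
      rw [Finset.disjoint_left]
      intro w hwi hwj
      rw [Finset.mem_filter] at hwi hwj
      have hdist : hammingDist (flipSet x (S i)) (flipSet x (S j))
          = (S i).card + (S j).card := hammingDist_flipSet (hpair i j hij)
      have htri := hammingDist_triangle_left (flipSet x (S i)) (flipSet x (S j)) w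
      rw [hcard i, hcard j] at hdist
      have h1 := hwi.2
      have h2 := hwj.2
      omega
    · intro j _ B
      exact not_congr (boot_local_ball R k (flipSet x (S j)) B)
  -- step 3: each factor is small
  have hfac : ∀ z : Fin n → Bool,
      probEvent (p n) (fun A0 => z ∉ bootSets (cubeGraph n 1) R A0 k)
        ≤ Real.exp (-c * (n:ℝ)^δ) := h n hc3
  have hprodle : ∀ S ∈ Fam,
      (∏ j : Fin m, probEvent (p n)
        (fun A0 => flipSet x (S j) ∉ bootSets (cubeGraph n 1) R A0 k))
      ≤ Real.exp (-c * (n:ℝ)^δ) ^ m := by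
    intro S _
    calc (∏ j : Fin m, probEvent (p n)
          (fun A0 => flipSet x (S j) ∉ bootSets (cubeGraph n 1) R A0 k))
        ≤ ∏ _j : Fin m, Real.exp (-c * (n:ℝ)^δ) :=
          Finset.prod_le_prod (fun j _ => probEvent_nonneg (hp n) _)
            (fun j _ => hfac _)
      _ = Real.exp (-c * (n:ℝ)^δ) ^ m := by
          rw [Finset.prod_const, Finset.card_univ, Fintype.card_fin]
  -- step 4: counting families
  have hcount : Fam.card ≤ (n^(k+1))^m := by
    have hsub : Fam ⊆ Fintype.piFinset
        (fun _ : Fin m => Finset.powersetCard (k+1) (Finset.univ : Finset (Fin n))) := by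
      intro S hS
      obtain ⟨-, hcard, -⟩ := Finset.mem_filter.1 hS
      rw [Fintype.mem_piFinset]
      intro j
      exact Finset.mem_powersetCard.2 ⟨Finset.subset_univ _, hcard j⟩
    calc Fam.card ≤ _ := Finset.card_le_card hsub
      _ = (n.choose (k+1))^m := by
          rw [Fintype.card_piFinset]
          simp [Finset.card_powersetCard]
      _ ≤ (n^(k+1))^m := Nat.pow_le_pow_left (Nat.choose_le_pow n (k+1)) m
  -- step 5: put everything together
  have hsum : probEvent (p n) (fun A0 => x ∉ bootSets (cubeGraph n 1) R A0 (2*k+1))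
      ≤ (Fam.card : ℝ) * Real.exp (-c * (n:ℝ)^δ) ^ m := by
    refine le_trans hle1 ?_
    calc ∑ S ∈ Fam, probEvent (p n)
          (fun A0 => ∀ j ∈ (Finset.univ : Finset (Fin m)),
            flipSet x (S j) ∉ bootSets (cubeGraph n 1) R A0 k)
        ≤ ∑ _S ∈ Fam, Real.exp (-c * (n:ℝ)^δ) ^ m :=
          Finset.sum_le_sum fun S hS => by rw [hprod S hS]; exact hprodle S hS
      _ = (Fam.card : ℝ) * Real.exp (-c * (n:ℝ)^δ) ^ m := by
          rw [Finset.sum_const, nsmul_eq_mul]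
  -- numeric endgame
  have hNbound : ((n:ℝ)^(k+1)) ≤ Real.exp ((c/2) * (n:ℝ)^δ) := by
    have hlogeq : (n:ℝ)^(k+1) = Real.exp (((k+1:ℕ):ℝ) * Real.log n) := by
      rw [← Real.log_pow, Real.exp_log (by positivity)]
    rw [hlogeq]
    refine Real.exp_le_exp.2 ?_
    push_cast
    exact hc2
  have hcardR : (Fam.card : ℝ) ≤ ((n:ℝ)^(k+1))^m := by
    have := hcount
    calc (Fam.card : ℝ) ≤ (((n^(k+1))^m : ℕ) : ℝ) := by exact_mod_cast hcount
      _ = ((n:ℝ)^(k+1))^m := by push_cast; ring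
  have hfinal : (Fam.card : ℝ) * Real.exp (-c * (n:ℝ)^δ) ^ m
      ≤ Real.exp (-(c / (8 * ((k:ℝ)+1))) * (n:ℝ)^(1+δ)) := by
    have hexp_nonneg : (0:ℝ) ≤ Real.exp (-c * (n:ℝ)^δ) ^ m :=
      pow_nonneg (Real.exp_pos _).le m
    have step1 : (Fam.card : ℝ) * Real.exp (-c * (n:ℝ)^δ) ^ m
        ≤ ((n:ℝ)^(k+1))^m * Real.exp (-c * (n:ℝ)^δ) ^ m :=
      mul_le_mul_of_nonneg_right hcardR hexp_nonneg
    have step2 : ((n:ℝ)^(k+1))^m * Real.exp (-c * (n:ℝ)^δ) ^ m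
        ≤ Real.exp ((c/2) * (n:ℝ)^δ) ^ m * Real.exp (-c * (n:ℝ)^δ) ^ m := by
      refine mul_le_mul_of_nonneg_right ?_ hexp_nonneg
      exact pow_le_pow_left₀ (by positivity) hNbound m
    have step3 : Real.exp ((c/2) * (n:ℝ)^δ) ^ m * Real.exp (-c * (n:ℝ)^δ) ^ m
        = Real.exp ((m:ℝ) * (-(c/2) * (n:ℝ)^δ)) := by
      rw [← Real.exp_nat_mul, ← Real.exp_nat_mul, ← Real.exp_add]
      ring_nf
    have hm4R : (n:ℝ) ≤ 4 * (((k:ℝ)+1) * (m:ℝ)) := by exact_mod_cast hm4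
    have hrpow : (n:ℝ)^(1+δ) = (n:ℝ) * (n:ℝ)^δ := by
      rw [Real.rpow_add hnpos, Real.rpow_one]
    have step4 : (m:ℝ) * (-(c/2) * (n:ℝ)^δ) ≤ -(c / (8 * ((k:ℝ)+1))) * (n:ℝ)^(1+δ) := by
      rw [hrpow]
      have hk1 : (0:ℝ) < (k:ℝ)+1 := by positivity
      have hrp : (0:ℝ) ≤ (n:ℝ)^δ := Real.rpow_nonneg (le_of_lt hnpos) δ
      have key : (c / (8 * ((k:ℝ)+1))) * (n:ℝ) ≤ (c/2) * (m:ℝ) := by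
        rw [div_mul_eq_mul_div, div_le_iff₀ (by positivity)]
        nlinarith
      nlinarith
    calc (Fam.card : ℝ) * Real.exp (-c * (n:ℝ)^δ) ^ m
        ≤ Real.exp ((c/2) * (n:ℝ)^δ) ^ m * Real.exp (-c * (n:ℝ)^δ) ^ m :=
          le_trans step1 step2
      _ = Real.exp ((m:ℝ) * (-(c/2) * (n:ℝ)^δ)) := step3
      _ ≤ Real.exp (-(c / (8 * ((k:ℝ)+1))) * (n:ℝ)^(1+δ)) := Real.exp_le_exp.2 step4
  exact le_trans hsum hfinal

end
end

section
/- Let t, k, d₁, …, d_k ∈ ℕ with t ≥ 1 and k ≥ 1, and let p ∈ (0,1). Let X₁, …, X_k be independent random variables with X_i ∼ Bin(d_i, p), let Y_k = Σ_{i=1}^k i·X_i, and let D(k) = Σ_{i=1}^k i²·d_i. Then P(Y_k ≥ E[Y_k] + t) ≤ (2t)^{k−1}·exp(−2t²/D(k)). -/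
open Finset Filter
open scoped Classical

noncomputable section

lemma hoeff_aux (p : ℝ) (hp0 : 0 < p) (hp1 : p < 1) (s : ℝ) (hs : 0 ≤ s) :
    1 - p + p * Real.exp s ≤ Real.exp (p * s + s ^ 2 / 8) := by
  have hD : ∀ u : ℝ, 0 < 1 - p + p * Real.exp u := by
    intro u
    nlinarith [Real.exp_pos u]
  -- g u = p e^u / D u
  set g : ℝ → ℝ := fun u => p * Real.exp u / (1 - p + p * Real.exp u) with hg
  have hgd : ∀ u : ℝ, HasDerivAt g
      (p * Real.exp u * (1 - p) / (1 - p + p * Real.exp u) ^ 2) u := by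
    intro u
    have h1 : HasDerivAt (fun u : ℝ => p * Real.exp u) (p * Real.exp u) u :=
      (Real.hasDerivAt_exp u).const_mul p
    have h2 : HasDerivAt (fun u : ℝ => 1 - p + p * Real.exp u) (p * Real.exp u) u := by
      simpa using h1.const_add (1 - p)
    have := h1.div h2 (ne_of_gt (hD u))
    refine this.congr_deriv ?_
    rw [div_eq_div_iff (ne_of_gt (pow_pos (hD u) 2)) (ne_of_gt (pow_pos (hD u) 2))]
    ring
  -- step 1 : g u ≤ p + u/4 for u ≥ 0
  have step1 : ∀ u : ℝ, 0 ≤ u → g u ≤ p + u / 4 := by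
    intro u hu
    have key : ∀ v : ℝ, HasDerivAt (fun w => p + w / 4 - g w)
        (1 / 4 - p * Real.exp v * (1 - p) / (1 - p + p * Real.exp v) ^ 2) v := by
      intro v
      have h4 : HasDerivAt (fun w : ℝ => p + w / 4) (1 / 4) v := by
        simpa using ((hasDerivAt_id v).div_const 4).const_add p
      exact h4.sub (hgd v)
    have hmono : MonotoneOn (fun w => p + w / 4 - g w) (Set.Ici 0) := by
      apply monotoneOn_of_deriv_nonneg (convex_Ici 0)
      · have hcg : Continuous g := by
          rw [continuous_iff_continuousAt]
          exact fun w => (hgd w).differentiableAt.continuousAt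
        exact ((continuous_const.add (continuous_id.div_const 4)).sub hcg).continuousOn
      · intro v _
        exact (key v).differentiableAt.differentiableWithinAt
      · intro v _
        rw [(key v).deriv]
        have hDv := hD v
        have hnum : p * Real.exp v * (1 - p) * 4 ≤ (1 - p + p * Real.exp v) ^ 2 := by
          nlinarith [sq_nonneg (1 - p - p * Real.exp v)]
        have : p * Real.exp v * (1 - p) / (1 - p + p * Real.exp v) ^ 2 ≤ 1 / 4 := by
          rw [div_le_div_iff₀ (by positivity) (by norm_num)]
          nlinarith
        linarith
    have h0 : (fun w => p + w / 4 - g w) 0 = 0 := by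
      simp [hg]
    have := hmono (Set.self_mem_Ici) (Set.mem_Ici.mpr hu) hu
    rw [h0] at this
    linarith
  -- step 2 : log D s ≤ p s + s^2/8
  have step2 : Real.log (1 - p + p * Real.exp s) ≤ p * s + s ^ 2 / 8 := by
    have key : ∀ v : ℝ, HasDerivAt (fun w => p * w + w ^ 2 / 8 - Real.log (1 - p + p * Real.exp w))
        (p + v / 4 - g v) v := by
      intro v
      have h1 : HasDerivAt (fun w : ℝ => p * Real.exp w) (p * Real.exp v) v :=
        (Real.hasDerivAt_exp v).const_mul p
      have h2 : HasDerivAt (fun w : ℝ => 1 - p + p * Real.exp w) (p * Real.exp v) v := by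
        simpa using h1.const_add (1 - p)
      have hlog : HasDerivAt (fun w => Real.log (1 - p + p * Real.exp w)) (g v) v := by
        simpa [hg] using h2.log (ne_of_gt (hD v))
      have hpoly : HasDerivAt (fun w : ℝ => p * w + w ^ 2 / 8) (p + v / 4) v := by
        have ha : HasDerivAt (fun w : ℝ => p * w) p v := by
          simpa using (hasDerivAt_id v).const_mul p
        have hb : HasDerivAt (fun w : ℝ => w ^ 2 / 8) (v / 4) v := by
          have := ((hasDerivAt_pow 2 v).div_const 8)
          refine this.congr_deriv ?_
          rw [show (2:ℕ) - 1 = 1 from rfl]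
          push_cast
          ring
        exact ha.add hb
      exact hpoly.sub hlog
    have hmono : MonotoneOn (fun w => p * w + w ^ 2 / 8 - Real.log (1 - p + p * Real.exp w))
        (Set.Ici 0) := by
      apply monotoneOn_of_deriv_nonneg (convex_Ici 0)
      · apply Continuous.continuousOn
        apply Continuous.sub (by continuity)
        exact (Real.continuousOn_log.comp_continuous (by continuity)
          fun w => ne_of_gt (hD w))
      · intro v _
        exact (key v).differentiableAt.differentiableWithinAt
      · intro v hv
        rw [(key v).deriv]
        have := step1 v (le_of_lt (by simpa using hv))
        linarith
    have h0 : (fun w => p * w + w ^ 2 / 8 - Real.log (1 - p + p * Real.exp w)) 0 = 0 := by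
      norm_num
    have := hmono (Set.self_mem_Ici) (Set.mem_Ici.mpr hs) hs
    rw [h0] at this
    simpa using this
  calc 1 - p + p * Real.exp s = Real.exp (Real.log (1 - p + p * Real.exp s)) :=
        (Real.exp_log (hD s)).symm
    _ ≤ Real.exp (p * s + s ^ 2 / 8) := Real.exp_le_exp.mpr step2

lemma binom_mgf (n : ℕ) (p c : ℝ) :
    (∑ v : Fin (n + 1),
        (n.choose (v : ℕ) : ℝ) * p ^ (v : ℕ) * (1 - p) ^ (n - (v : ℕ)) * Real.exp (c * v)) =
      (p * Real.exp c + (1 - p)) ^ n := by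
  rw [Fin.sum_univ_eq_sum_range
    (fun v => (n.choose v : ℝ) * p ^ v * (1 - p) ^ (n - v) * Real.exp (c * v)), add_pow]
  apply Finset.sum_congr rfl
  intro v _
  rw [mul_pow, ← Real.exp_nat_mul]
  ring_nf

/-- Let `t, k ≥ 1`, `d₁, …, d_k ∈ ℕ` and `p ∈ (0,1)`.  Let
`X₁, …, X_k` be independent with `X_i ∼ Bin(d_i, p)` (here the joint distribution is given
explicitly as the product of binomial weights over outcomes `x i ∈ {0,…,d_i}`), let
`Y_k = ∑ i·X_i` (with `i` running through `1,…,k`), whose expectation is `p·∑ i·d_i`, and let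
`D(k) = ∑ i²·d_i`.  Then `P(Y_k ≥ E[Y_k] + t) ≤ (2t)^{k-1}·exp(-2t²/D(k))`. -/
theorem weighted_binomial_tail (k t : ℕ) (hk : 1 ≤ k) (ht : 1 ≤ t) (d : Fin k → ℕ)
    (p : ℝ) (hp₀ : 0 < p) (hp₁ : p < 1) :
    (∑ x : ∀ i : Fin k, Fin (d i + 1),
        if p * ((∑ i : Fin k, ((i : ℕ) + 1) * d i : ℕ) : ℝ) + (t : ℝ) ≤
            ((∑ i : Fin k, ((i : ℕ) + 1) * (x i : ℕ) : ℕ) : ℝ) then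
          ∏ i : Fin k,
            ((d i).choose (x i : ℕ) : ℝ) * p ^ (x i : ℕ) * (1 - p) ^ (d i - (x i : ℕ))
        else 0) ≤
      (2 * (t : ℝ)) ^ (k - 1) *
        Real.exp (-2 * (t : ℝ) ^ 2 / ((∑ i : Fin k, ((i : ℕ) + 1) ^ 2 * d i : ℕ) : ℝ)) := by
  set Sn : ℕ := ∑ i : Fin k, ((i : ℕ) + 1) * d i with hSn
  set Dn : ℕ := ∑ i : Fin k, ((i : ℕ) + 1) ^ 2 * d i with hDn
  have ht1 : (1 : ℝ) ≤ (t : ℝ) := by exact_mod_cast ht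
  -- the weight of a configuration is nonnegative
  have hwnn : ∀ x : ∀ i : Fin k, Fin (d i + 1),
      0 ≤ ∏ i : Fin k,
        ((d i).choose (x i : ℕ) : ℝ) * p ^ (x i : ℕ) * (1 - p) ^ (d i - (x i : ℕ)) := by
    intro x
    apply Finset.prod_nonneg
    intro i _
    have : (0:ℝ) ≤ 1 - p := by linarith
    positivity
  rcases Nat.eq_zero_or_pos Dn with hD0 | hDpos
  · -- degenerate case : all dᵢ = 0
    have hd0 : ∀ i : Fin k, d i = 0 := by
      intro i
      have h2 := (Finset.sum_eq_zero_iff.mp hD0) i (Finset.mem_univ i)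
      exact (Nat.mul_eq_zero.mp h2).resolve_left (by positivity)
    have hL : (∑ x : ∀ i : Fin k, Fin (d i + 1),
        if p * (Sn : ℝ) + (t : ℝ) ≤
            ((∑ i : Fin k, ((i : ℕ) + 1) * (x i : ℕ) : ℕ) : ℝ) then
          ∏ i : Fin k,
            ((d i).choose (x i : ℕ) : ℝ) * p ^ (x i : ℕ) * (1 - p) ^ (d i - (x i : ℕ))
        else 0) = 0 := by
      apply Finset.sum_eq_zero
      intro x _
      rw [if_neg]
      have hx : (∑ i : Fin k, ((i : ℕ) + 1) * (x i : ℕ)) = 0 := by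
        apply Finset.sum_eq_zero
        intro i _
        have h1 := (x i).isLt
        have h2 := hd0 i
        have h3 : (x i : ℕ) = 0 := by omega
        rw [h3, mul_zero]
      rw [hx]
      have hSnn : (0:ℝ) ≤ p * (Sn : ℝ) := by positivity
      push_cast
      intro h
      linarith
    rw [hL]
    positivity
  · -- main case
    have hDR : (1:ℝ) ≤ (Dn : ℝ) := by exact_mod_cast hDpos
    have hDne : (Dn : ℝ) ≠ 0 := by linarith
    set L : ℝ := 4 * (t : ℝ) / (Dn : ℝ) with hLdef
    have hLpos : 0 < L := by positivity
    set a : ℝ := p * (Sn : ℝ) + (t : ℝ) with hadef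
    calc (∑ x : ∀ i : Fin k, Fin (d i + 1),
        if p * (Sn : ℝ) + (t : ℝ) ≤
            ((∑ i : Fin k, ((i : ℕ) + 1) * (x i : ℕ) : ℕ) : ℝ) then
          ∏ i : Fin k,
            ((d i).choose (x i : ℕ) : ℝ) * p ^ (x i : ℕ) * (1 - p) ^ (d i - (x i : ℕ))
        else 0)
        ≤ ∑ x : ∀ i : Fin k, Fin (d i + 1),
            Real.exp (L * (((∑ i : Fin k, ((i : ℕ) + 1) * (x i : ℕ) : ℕ) : ℝ) - a)) *
              ∏ i : Fin k,
                ((d i).choose (x i : ℕ) : ℝ) * p ^ (x i : ℕ) * (1 - p) ^ (d i - (x i : ℕ)) := by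
          apply Finset.sum_le_sum
          intro x _
          split_ifs with h
          · apply le_mul_of_one_le_left (hwnn x)
            apply Real.one_le_exp
            have : (0:ℝ) ≤ ((∑ i : Fin k, ((i : ℕ) + 1) * (x i : ℕ) : ℕ) : ℝ) - a := by
              rw [hadef]; linarith
            positivity
          · exact mul_nonneg (Real.exp_pos _).le (hwnn x)
      _ = Real.exp (-(L * a)) *
            ∑ x : ∀ i : Fin k, Fin (d i + 1),
              ∏ i : Fin k,
                (((d i).choose (x i : ℕ) : ℝ) * p ^ (x i : ℕ) * (1 - p) ^ (d i - (x i : ℕ)) *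
                  Real.exp (L * ((((i : ℕ) + 1) * (x i : ℕ) : ℕ) : ℝ))) := by
          rw [Finset.mul_sum]
          apply Finset.sum_congr rfl
          intro x _
          have h1 : (∏ i : Fin k,
              (((d i).choose (x i : ℕ) : ℝ) * p ^ (x i : ℕ) * (1 - p) ^ (d i - (x i : ℕ)) *
                Real.exp (L * ((((i : ℕ) + 1) * (x i : ℕ) : ℕ) : ℝ)))) =
              (∏ i : Fin k,
                ((d i).choose (x i : ℕ) : ℝ) * p ^ (x i : ℕ) * (1 - p) ^ (d i - (x i : ℕ))) *
                Real.exp (L * ((∑ i : Fin k, ((i : ℕ) + 1) * (x i : ℕ) : ℕ) : ℝ)) := by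
            rw [Finset.prod_mul_distrib]
            congr 1
            rw [← Real.exp_sum, ← Finset.mul_sum]
            congr 1
            push_cast
            ring
          rw [h1, show L * (((∑ i : Fin k, ((i : ℕ) + 1) * (x i : ℕ) : ℕ) : ℝ) - a) =
            -(L * a) + L * ((∑ i : Fin k, ((i : ℕ) + 1) * (x i : ℕ) : ℕ) : ℝ) by ring,
            Real.exp_add]
          ring
      _ = Real.exp (-(L * a)) *
            ∏ i : Fin k, ∑ v : Fin (d i + 1),
              (((d i).choose (v : ℕ) : ℝ) * p ^ (v : ℕ) * (1 - p) ^ (d i - (v : ℕ)) *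
                Real.exp (L * ((((i : ℕ) + 1) * (v : ℕ) : ℕ) : ℝ))) := by
          congr 1
          exact (Fintype.prod_sum (fun i (v : Fin (d i + 1)) =>
            ((d i).choose (v : ℕ) : ℝ) * p ^ (v : ℕ) * (1 - p) ^ (d i - (v : ℕ)) *
              Real.exp (L * ((((i : ℕ) + 1) * (v : ℕ) : ℕ) : ℝ)))).symm
      _ = Real.exp (-(L * a)) *
            ∏ i : Fin k, (p * Real.exp (L * (((i : ℕ) : ℝ) + 1)) + (1 - p)) ^ d i := by
          congr 1
          apply Finset.prod_congr rfl
          intro i _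
          rw [← binom_mgf (d i) p (L * (((i : ℕ) : ℝ) + 1))]
          apply Finset.sum_congr rfl
          intro v _
          congr 1
          push_cast
          ring
      _ ≤ Real.exp (-(L * a)) *
            ∏ i : Fin k,
              Real.exp ((d i : ℝ) *
                (p * (L * (((i : ℕ) : ℝ) + 1)) + (L * (((i : ℕ) : ℝ) + 1)) ^ 2 / 8)) := by
          apply mul_le_mul_of_nonneg_left _ (Real.exp_pos _).le
          apply Finset.prod_le_prod
          · intro i _
            have : (0:ℝ) ≤ 1 - p := by linarith
            positivity
          · intro i _
            have hs : 0 ≤ L * (((i : ℕ) : ℝ) + 1) := by positivity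
            have hb := hoeff_aux p hp₀ hp₁ (L * (((i : ℕ) : ℝ) + 1)) hs
            have heq : p * Real.exp (L * (((i : ℕ) : ℝ) + 1)) + (1 - p) =
                1 - p + p * Real.exp (L * (((i : ℕ) : ℝ) + 1)) := by ring
            rw [heq]
            calc (1 - p + p * Real.exp (L * (((i : ℕ) : ℝ) + 1))) ^ d i
                ≤ (Real.exp (p * (L * (((i : ℕ) : ℝ) + 1)) +
                    (L * (((i : ℕ) : ℝ) + 1)) ^ 2 / 8)) ^ d i := by
                  apply pow_le_pow_left₀ _ hb
                  have h1p : (0:ℝ) ≤ 1 - p := by linarith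
                  positivity
              _ = Real.exp ((d i : ℝ) *
                    (p * (L * (((i : ℕ) : ℝ) + 1)) + (L * (((i : ℕ) : ℝ) + 1)) ^ 2 / 8)) := by
                  rw [← Real.exp_nat_mul]
      _ = Real.exp (-(L * a) + ∑ i : Fin k, (d i : ℝ) *
              (p * (L * (((i : ℕ) : ℝ) + 1)) + (L * (((i : ℕ) : ℝ) + 1)) ^ 2 / 8)) := by
          rw [← Real.exp_sum, ← Real.exp_add]
      _ = Real.exp (-2 * (t : ℝ) ^ 2 / (Dn : ℝ)) := by
          congr 1
          have hsum : (∑ i : Fin k, (d i : ℝ) *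
              (p * (L * (((i : ℕ) : ℝ) + 1)) + (L * (((i : ℕ) : ℝ) + 1)) ^ 2 / 8)) =
              p * L * (Sn : ℝ) + L ^ 2 / 8 * (Dn : ℝ) := by
            rw [hSn, hDn]
            push_cast
            rw [Finset.mul_sum, Finset.mul_sum, ← Finset.sum_add_distrib]
            apply Finset.sum_congr rfl
            intro i _
            ring
          rw [hsum, hadef, hLdef]
          field_simp
          ring
      _ ≤ (2 * (t : ℝ)) ^ (k - 1) * Real.exp (-2 * (t : ℝ) ^ 2 / (Dn : ℝ)) := by
          apply le_mul_of_one_le_left (Real.exp_pos _).le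
          calc (1:ℝ) = 1 ^ (k - 1) := (one_pow _).symm
            _ ≤ (2 * (t : ℝ)) ^ (k - 1) := by
                apply pow_le_pow_left₀ (by norm_num) (by linarith)

end
end
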